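/- arXiv:1912.05547 — 5 statements merged into one kernel-verified Lean document; each statement's English description precedes it below -/
import Mathlib

section
/- For vectors over F_2, the inner product of a vector y with s, where y is the sum of all rows p of a matrix P satisfying p·d = p·e = 1, equals the sum over rows p of P_s (rows of P with p·s = 1) of (p·d)(p·e), which equals (P_s d)·(P_s e). -/
open Matrix Finset

lemma zmod2_cases (x : ZMod 2) : x = 0 ∨ x = 1 := by revert x; decide

lemma sum_dot {κ : Type*} {n : ℕ} (F : Finset κ) (f : κ → Fin n → ZMod 2)
    (s : Fin n → ZMod 2) : (∑ i ∈ F, f i) ⬝ᵥ s = ∑ i ∈ F, f i ⬝ᵥ s := by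
  simp only [dotProduct, Finset.sum_apply, Finset.sum_mul]
  exact Finset.sum_comm

/-- Over F_2, the inner product with `s` of the sum `y` of all rows `p`
of `P` with `p·d = p·e = 1` equals `∑_{p row of P_s} (p·d)(p·e)`, which equals
`(P_s d)·(P_s e)`, where `P_s` is the submatrix of rows `p` with `p·s = 1`. -/
theorem stmt_0 (m n : ℕ) (P : Matrix (Fin m) (Fin n) (ZMod 2))
    (s d e : Fin n → ZMod 2)
    (y : Fin n → ZMod 2)
    (hy : y = ∑ i ∈ Finset.univ.filter (fun i => P i ⬝ᵥ d = 1 ∧ P i ⬝ᵥ e = 1), P i)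
    (Ps : Matrix {i : Fin m // P i ⬝ᵥ s = 1} (Fin n) (ZMod 2))
    (hPs : ∀ i, Ps i = P i.1) :
    y ⬝ᵥ s = ∑ i ∈ Finset.univ.filter (fun i => P i ⬝ᵥ s = 1), (P i ⬝ᵥ d) * (P i ⬝ᵥ e)
      ∧ y ⬝ᵥ s = (Ps.mulVec d) ⬝ᵥ (Ps.mulVec e) := by
  have key : y ⬝ᵥ s
      = ∑ i ∈ Finset.univ.filter (fun i => P i ⬝ᵥ s = 1), (P i ⬝ᵥ d) * (P i ⬝ᵥ e) := by
    rw [hy, sum_dot _ (fun i => P i), Finset.sum_filter, Finset.sum_filter]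
    apply Finset.sum_congr rfl
    intro i _
    rcases zmod2_cases (P i ⬝ᵥ d) with hd | hd <;>
    rcases zmod2_cases (P i ⬝ᵥ e) with he | he <;>
    rcases zmod2_cases (P i ⬝ᵥ s) with hs | hs <;>
    simp [hd, he, hs]
  refine ⟨key, key.trans ?_⟩
  have h2 : (Ps.mulVec d) ⬝ᵥ (Ps.mulVec e)
      = ∑ i : {i : Fin m // P i ⬝ᵥ s = 1}, (P i.1 ⬝ᵥ d) * (P i.1 ⬝ᵥ e) := by
    simp only [dotProduct, Matrix.mulVec, hPs]
    exact Finset.sum_congr rfl fun i _ => by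
      have h : ∀ x, Ps i x = P i.1 x := fun x => congrFun (hPs i) x
      simp only [h]
  rw [h2]
  exact Finset.sum_subtype _ (by simp) _
end

section
/- Let G be a k×n generator matrix over F_2 such that the code C = {G d : d ∈ F_2^n} contains an odd-parity codeword, and suppose any two codewords c, c' of C satisfy c·c' = 0 iff c or c' has even parity. If d, e are chosen independently and uniformly at random from F_2^n, then the probability that (G d)·(G e) = 0 equals 3/4. -/
open Matrix
open scoped Classical

/-- If the code `C = {G d : d}` contains an odd-parity codeword and
two codewords are orthogonal iff one of them has even parity, then for `d, e`
uniform on `F_2^n`, the probability that `(G d)·(G e) = 0` is `3/4`. -/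
theorem stmt_3 (k n : ℕ) (G : Matrix (Fin k) (Fin n) (ZMod 2))
    (C : Set (Fin k → ZMod 2)) (hC : C = Set.range G.mulVec)
    (hodd : ∃ c ∈ C, ∑ i, c i = 1)
    (horth : ∀ c ∈ C, ∀ c' ∈ C, (c ⬝ᵥ c' = 0 ↔ (∑ i, c i = 0 ∨ ∑ i, c' i = 0))) :
    4 * (Finset.univ.filter
          (fun de : (Fin n → ZMod 2) × (Fin n → ZMod 2) =>
            (G.mulVec de.1) ⬝ᵥ (G.mulVec de.2) = 0)).card
      = 3 * Fintype.card ((Fin n → ZMod 2) × (Fin n → ZMod 2)) := by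
  classical
  set p : (Fin n → ZMod 2) → ZMod 2 := fun d => ∑ i, G.mulVec d i with hp
  have hmem : ∀ d, G.mulVec d ∈ C := by intro d; rw [hC]; exact ⟨d, rfl⟩
  have hiff : ∀ de : (Fin n → ZMod 2) × (Fin n → ZMod 2),
      ((G.mulVec de.1) ⬝ᵥ (G.mulVec de.2) = 0) ↔ (p de.1 = 0 ∨ p de.2 = 0) :=
    fun de => horth _ (hmem de.1) _ (hmem de.2)
  obtain ⟨c, hcC, hc1⟩ := hodd
  rw [hC] at hcC
  obtain ⟨d0, rfl⟩ := hcC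
  have padd : ∀ d e, p (d + e) = p d + p e := by
    intro d e
    simp [hp, Matrix.mulVec_add, Finset.sum_add_distrib]
  have hpd0 : p d0 = 1 := hc1
  have h2 : ∀ x : ZMod 2, x + x = 0 := by decide
  set A := (Finset.univ.filter fun d : Fin n → ZMod 2 => p d = 0) with hA
  set B := (Finset.univ.filter fun d : Fin n → ZMod 2 => p d = 1) with hB
  have hAB : A.card = B.card := by
    apply Finset.card_bij' (fun d _ => d + d0) (fun d _ => d + d0)
    · intro a ha
      simp only [hA, Finset.mem_filter, Finset.mem_univ, true_and] at ha
      simp only [hB, Finset.mem_filter, Finset.mem_univ, true_and]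
      rw [padd, ha, hpd0, zero_add]
    · intro a ha
      simp only [hB, Finset.mem_filter, Finset.mem_univ, true_and] at ha
      simp only [hA, Finset.mem_filter, Finset.mem_univ, true_and]
      rw [padd, ha, hpd0]
      decide
    · intro a _
      ext i
      simp [add_assoc, h2]
    · intro a _
      ext i
      simp [add_assoc, h2]
  have hsum : A.card + B.card = Fintype.card (Fin n → ZMod 2) := by
    have htot := Finset.card_filter_add_card_filter_not
      (s := (Finset.univ : Finset (Fin n → ZMod 2))) (p := fun d => p d = 0)
    have heq : (Finset.univ.filter (fun d : Fin n → ZMod 2 => ¬ p d = 0)) = B := by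
      ext x
      simp only [hB, Finset.mem_filter, Finset.mem_univ, true_and]
      generalize p x = y
      revert y; decide
    rw [heq] at htot
    rw [← Finset.card_univ]
    exact htot
  set bad := (Finset.univ.filter
      (fun de : (Fin n → ZMod 2) × (Fin n → ZMod 2) => p de.1 = 1 ∧ p de.2 = 1)) with hbad
  have hbadcard : bad.card = B.card * B.card := by
    have : bad = B ×ˢ B := by
      ext ⟨a, b⟩
      simp [hbad, hB, Finset.mem_product]
    rw [this, Finset.card_product]
  set good := (Finset.univ.filter
          (fun de : (Fin n → ZMod 2) × (Fin n → ZMod 2) =>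
            (G.mulVec de.1) ⬝ᵥ (G.mulVec de.2) = 0)) with hgood
  have hgoodbad : good.card + bad.card
      = Fintype.card ((Fin n → ZMod 2) × (Fin n → ZMod 2)) := by
    have htot := Finset.card_filter_add_card_filter_not
      (s := (Finset.univ : Finset ((Fin n → ZMod 2) × (Fin n → ZMod 2))))
      (p := fun de => (G.mulVec de.1) ⬝ᵥ (G.mulVec de.2) = 0)
    have heq : (Finset.univ.filter
        (fun de : (Fin n → ZMod 2) × (Fin n → ZMod 2) =>
          ¬ ((G.mulVec de.1) ⬝ᵥ (G.mulVec de.2) = 0))) = bad := by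
      ext de
      simp only [hbad, Finset.mem_filter, Finset.mem_univ, true_and, hiff de]
      generalize p de.1 = x
      generalize p de.2 = y
      revert x y; decide
    rw [heq] at htot
    rw [← Finset.card_univ]
    exact htot
  have hN : Fintype.card ((Fin n → ZMod 2) × (Fin n → ZMod 2))
      = Fintype.card (Fin n → ZMod 2) * Fintype.card (Fin n → ZMod 2) :=
    Fintype.card_prod _ _
  have key : Fintype.card (Fin n → ZMod 2) * Fintype.card (Fin n → ZMod 2)
      = 4 * (B.card * B.card) := by
    have h2' : Fintype.card (Fin n → ZMod 2) = 2 * B.card := by omega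
    rw [h2']; ring
  omega
end

section
/- Let P be an m×n matrix over F_2, s ∈ F_2^n, and let P_s (rows p with p·s=1) be a generator matrix for a code C (codewords P_s x for x ∈ F_2^n). Fix d ∈ F_2^n with P_s d of even parity, and assume any two codewords c, c' of C satisfy c·c' = 0 iff c or c' has even parity. Then for every e ∈ F_2^n, the vector m̄ = Σ_{p row of P, p·d = p·e = 1} p satisfies m̄·s = 0. -/
open Matrix

/-- If `P_s d` has even parity and two codewords of the code generated
by `P_s` are orthogonal iff one has even parity, then for every `e`, the vector
`m̄ = Σ_{p row of P, p·d = p·e = 1} p` satisfies `m̄·s = 0`. -/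
theorem stmt_5 (m n : ℕ) (P : Matrix (Fin m) (Fin n) (ZMod 2)) (s d : Fin n → ZMod 2)
    (Ps : Matrix {i : Fin m // P i ⬝ᵥ s = 1} (Fin n) (ZMod 2))
    (hPs : ∀ i, Ps i = P i.1)
    (C : Set ({i : Fin m // P i ⬝ᵥ s = 1} → ZMod 2)) (hC : C = Set.range Ps.mulVec)
    (hd : ∑ i, Ps.mulVec d i = 0)
    (horth : ∀ c ∈ C, ∀ c' ∈ C, (c ⬝ᵥ c' = 0 ↔ (∑ i, c i = 0 ∨ ∑ i, c' i = 0))) :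
    ∀ e : Fin n → ZMod 2,
      (∑ i ∈ Finset.univ.filter (fun i => P i ⬝ᵥ d = 1 ∧ P i ⬝ᵥ e = 1), P i) ⬝ᵥ s = 0 := by
  intro e
  have hc : Ps.mulVec d ∈ C := hC ▸ ⟨d, rfl⟩
  have hc' : Ps.mulVec e ∈ C := hC ▸ ⟨e, rfl⟩
  have h0 : Ps.mulVec d ⬝ᵥ Ps.mulVec e = 0 :=
    (horth _ hc _ hc').mpr (Or.inl hd)
  have key : ∀ x y z : ZMod 2, (if y = 1 ∧ z = 1 then x else 0) = x * y * z := by decide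
  have key2 : ∀ x y z : ZMod 2, (if x = 1 then y * z else 0) = x * y * z := by decide
  calc (∑ i ∈ Finset.univ.filter (fun i => P i ⬝ᵥ d = 1 ∧ P i ⬝ᵥ e = 1), P i) ⬝ᵥ s
      = ∑ i ∈ Finset.univ.filter (fun i => P i ⬝ᵥ d = 1 ∧ P i ⬝ᵥ e = 1), P i ⬝ᵥ s := by
        exact sum_dotProduct _ _ _
    _ = ∑ i : Fin m, (P i ⬝ᵥ s) * (P i ⬝ᵥ d) * (P i ⬝ᵥ e) := by
        rw [Finset.sum_filter]; exact Finset.sum_congr rfl fun i _ => key _ _ _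
    _ = ∑ i : Fin m, if P i ⬝ᵥ s = 1 then (P i ⬝ᵥ d) * (P i ⬝ᵥ e) else 0 := by
        exact Finset.sum_congr rfl fun i _ => (key2 _ _ _).symm
    _ = ∑ i ∈ Finset.univ.filter (fun i => P i ⬝ᵥ s = 1), (P i ⬝ᵥ d) * (P i ⬝ᵥ e) := by
        rw [Finset.sum_filter]
    _ = ∑ i : {i : Fin m // P i ⬝ᵥ s = 1}, (P i.1 ⬝ᵥ d) * (P i.1 ⬝ᵥ e) := by
        exact Finset.sum_subtype _ (by simp) _
    _ = Ps.mulVec d ⬝ᵥ Ps.mulVec e := by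
        exact Finset.sum_congr rfl fun i _ => by simp only [Matrix.mulVec, hPs]
    _ = 0 := h0
end

section
/- Under the assumptions that P_s has an odd number of rows, P_s generates a code C in which two codewords are orthogonal iff one has even parity, and C contains an odd-parity codeword: if d is chosen uniformly at random from F_2^n, then with probability exactly 1/2, for all e ∈ F_2^n the vector m_e = m* + Σ_{p row of P, p·d = p·e = 1} p satisfies m_e·s = 1, where m* is the sum of all rows of P. -/
open Matrix
open scoped Classical


private lemma sum_dotProduct' {ι κ : Type*} [Fintype κ] (t : Finset ι)
    (f : ι → κ → ZMod 2) (w : κ → ZMod 2) :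
    (∑ i ∈ t, f i) ⬝ᵥ w = ∑ i ∈ t, f i ⬝ᵥ w := by
  simp only [dotProduct, Finset.sum_apply, Finset.sum_mul]
  exact Finset.sum_comm

/-- Under the assumptions that `P_s` has an odd number of rows, that
two codewords of the code `C` generated by `P_s` are orthogonal iff one has even
parity, and that `C` contains an odd-parity codeword: for `d` uniform on `F_2^n`,
with probability exactly `1/2`, for all `e` the vector
`m_e = m* + Σ_{p·d = p·e = 1} p` satisfies `m_e·s = 1`. -/
theorem stmt_6 (m n : ℕ) (P : Matrix (Fin m) (Fin n) (ZMod 2)) (s : Fin n → ZMod 2)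
    (Ps : Matrix {i : Fin m // P i ⬝ᵥ s = 1} (Fin n) (ZMod 2))
    (hPs : ∀ i, Ps i = P i.1)
    (C : Set ({i : Fin m // P i ⬝ᵥ s = 1} → ZMod 2)) (hC : C = Set.range Ps.mulVec)
    (hrows : Odd (Finset.univ.filter (fun i => P i ⬝ᵥ s = 1)).card)
    (horth : ∀ c ∈ C, ∀ c' ∈ C, (c ⬝ᵥ c' = 0 ↔ (∑ i, c i = 0 ∨ ∑ i, c' i = 0)))
    (hodd : ∃ c ∈ C, ∑ i, c i = 1)
    (mstar : Fin n → ZMod 2) (hmstar : mstar = ∑ i, P i) :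
    2 * (Finset.univ.filter
          (fun d : Fin n → ZMod 2 => ∀ e : Fin n → ZMod 2,
            (mstar + ∑ i ∈ Finset.univ.filter
                (fun i => P i ⬝ᵥ d = 1 ∧ P i ⬝ᵥ e = 1), P i) ⬝ᵥ s = 1)).card
      = Fintype.card (Fin n → ZMod 2) := by
  classical
  have h01 : ∀ a : ZMod 2, a = 0 ∨ a = 1 := by decide
  have haa : ∀ a : ZMod 2, a + a = 0 := by decide
  set v : Fin n → ZMod 2 := ∑ j : {i : Fin m // P i ⬝ᵥ s = 1}, Ps j with hv
  obtain ⟨c0, hc0C, hc0⟩ := hodd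
  have hc0C' := hc0C
  rw [hC] at hc0C'
  obtain ⟨e0, he0⟩ := hc0C'
  -- mstar ⬝ᵥ s = 1
  have hm1 : mstar ⬝ᵥ s = 1 := by
    erw [hmstar, sum_dotProduct']
    have : ∀ i : Fin m, P i ⬝ᵥ s = if P i ⬝ᵥ s = 1 then (1 : ZMod 2) else 0 := by
      intro i; rcases h01 (P i ⬝ᵥ s) with h | h <;> simp [h]
    rw [Finset.sum_congr rfl (fun i _ => this i), Finset.sum_boole]
    obtain ⟨k, hk⟩ := hrows
    rw [hk]
    push_cast
    have h2 : (2 : ZMod 2) = 0 := by decide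
    rw [h2]; ring
  -- the inner dot-sum equals a codeword dot product
  have hsum : ∀ d e : Fin n → ZMod 2,
      (∑ i ∈ Finset.univ.filter (fun i => P i ⬝ᵥ d = 1 ∧ P i ⬝ᵥ e = 1), P i) ⬝ᵥ s
        = (Ps.mulVec d) ⬝ᵥ (Ps.mulVec e) := by
    intro d e
    erw [sum_dotProduct', Finset.sum_filter]
    have step1 : ∀ i : Fin m,
        (if P i ⬝ᵥ d = 1 ∧ P i ⬝ᵥ e = 1 then P i ⬝ᵥ s else 0)
          = (P i ⬝ᵥ s) * ((P i ⬝ᵥ d) * (P i ⬝ᵥ e)) := by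
      intro i
      rcases h01 (P i ⬝ᵥ d) with h1 | h1 <;>
        rcases h01 (P i ⬝ᵥ e) with h2 | h2 <;>
          simp [h1, h2]
    rw [Finset.sum_congr rfl (fun i _ => step1 i)]
    have step2 : (∑ i : Fin m, (P i ⬝ᵥ s) * ((P i ⬝ᵥ d) * (P i ⬝ᵥ e)))
        = ∑ i ∈ Finset.univ.filter (fun i => P i ⬝ᵥ s = 1),
            ((P i ⬝ᵥ d) * (P i ⬝ᵥ e)) := by
      rw [Finset.sum_filter]
      refine Finset.sum_congr rfl fun i _ => ?_
      rcases h01 (P i ⬝ᵥ s) with h | h <;> simp [h]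
    rw [step2]
    have step3 : (∑ i ∈ Finset.univ.filter (fun i => P i ⬝ᵥ s = 1),
            ((P i ⬝ᵥ d) * (P i ⬝ᵥ e)))
        = ∑ j : {i : Fin m // P i ⬝ᵥ s = 1}, ((P j.1 ⬝ᵥ d) * (P j.1 ⬝ᵥ e)) := by
      rw [← Finset.sum_subtype (Finset.univ.filter (fun i => P i ⬝ᵥ s = 1))
        (by intro x; simp) (fun i => (P i ⬝ᵥ d) * (P i ⬝ᵥ e))]
    rw [step3]
    simp only [dotProduct, Matrix.mulVec, hPs]
    exact Finset.sum_congr rfl fun i _ => by erw [hPs]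
  -- key equivalence
  have hpar : ∀ d : Fin n → ZMod 2, (∑ j, Ps.mulVec d j) = v ⬝ᵥ d := by
    intro d
    erw [hv, sum_dotProduct']
    rfl
  have hv0 : v ⬝ᵥ e0 = 1 := by
    rw [← hpar, he0, hc0]
  have key : ∀ d : Fin n → ZMod 2,
      (∀ e : Fin n → ZMod 2, (mstar + ∑ i ∈ Finset.univ.filter
            (fun i => P i ⬝ᵥ d = 1 ∧ P i ⬝ᵥ e = 1), P i) ⬝ᵥ s = 1)
      ↔ v ⬝ᵥ d = 0 := by
    intro d
    have hmem : ∀ x : Fin n → ZMod 2, Ps.mulVec x ∈ C := by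
      intro x; rw [hC]; exact ⟨x, rfl⟩
    constructor
    · intro h
      have h' := h e0
      rw [add_dotProduct, hm1, hsum] at h'
      have hdot : (Ps.mulVec d) ⬝ᵥ (Ps.mulVec e0) = 0 := by
        have := haa ((Ps.mulVec d) ⬝ᵥ (Ps.mulVec e0))
        -- h' : 1 + x = 1  →  x = 0
        have hx : (Ps.mulVec d) ⬝ᵥ (Ps.mulVec e0) = 0 := by
          rcases h01 ((Ps.mulVec d) ⬝ᵥ (Ps.mulVec e0)) with hx | hx
          · exact hx
          · rw [hx] at h'; exact absurd h' (by decide)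
        exact hx
      have := (horth _ (hmem d) _ (hmem e0)).mp hdot
      rcases this with h0 | h0
      · rw [← hpar]; exact h0
      · rw [he0, hc0] at h0; exact absurd h0 (by decide)
    · intro h e
      rw [add_dotProduct, hm1, hsum]
      have hdot : (Ps.mulVec d) ⬝ᵥ (Ps.mulVec e) = 0 := by
        refine (horth _ (hmem d) _ (hmem e)).mpr (Or.inl ?_)
        rw [hpar]; exact h
      rw [hdot, add_zero]
  -- rewrite the filter
  rw [Finset.filter_congr (fun d _ => by
    simpa using (key d))]
  -- counting
  have hbij : (Finset.univ.filter (fun d : Fin n → ZMod 2 => v ⬝ᵥ d = 0)).card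
      = (Finset.univ.filter (fun d : Fin n → ZMod 2 => ¬ (v ⬝ᵥ d = 0))).card := by
    apply Finset.card_bij' (fun d _ => d + e0) (fun d _ => d + e0)
    · intro d hd
      simp only [Finset.mem_filter, Finset.mem_univ, true_and] at hd ⊢
      rw [dotProduct_add, hd, hv0]
      decide
    · intro d hd
      simp only [Finset.mem_filter, Finset.mem_univ, true_and] at hd ⊢
      rw [dotProduct_add, hv0]
      rcases h01 (v ⬝ᵥ d) with h | h
      · exact absurd h hd
      · rw [h]; decide
    · intro d _
      funext x
      simp only [Pi.add_apply]
      rw [add_assoc, haa, add_zero]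
    · intro d _
      funext x
      simp only [Pi.add_apply]
      rw [add_assoc, haa, add_zero]
  have hsplit : (Finset.univ.filter (fun d : Fin n → ZMod 2 => v ⬝ᵥ d = 0)).card
      + (Finset.univ.filter (fun d : Fin n → ZMod 2 => ¬ (v ⬝ᵥ d = 0))).card
      = Fintype.card (Fin n → ZMod 2) := by
    rw [← Finset.card_univ]
    exact Finset.card_filter_add_card_filter_not (fun d => v ⬝ᵥ d = 0)
  omega
end

section
/- Let C ⊆ F_2^q be a linear code such that every codeword c satisfies wt(c) ≡ 0 or −1 (mod 4). Then for any two codewords c, c', if both c and c' have weight ≡ −1 (mod 4), then c·c' = 1. -/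
open Matrix

/-- In a binary linear code where every codeword has weight ≡ 0 or −1
(mod 4), any two codewords of weight ≡ −1 (mod 4) have inner product 1. -/
theorem stmt_9 (q : ℕ) (C : Submodule (ZMod 2) (Fin q → ZMod 2))
    (hwt : ∀ c ∈ C, (Finset.univ.filter (fun i => c i = 1)).card % 4 = 0
                  ∨ (Finset.univ.filter (fun i => c i = 1)).card % 4 = 3) :
    ∀ c ∈ C, ∀ c' ∈ C,
      (Finset.univ.filter (fun i => c i = 1)).card % 4 = 3 →
      (Finset.univ.filter (fun i => c' i = 1)).card % 4 = 3 →
      c ⬝ᵥ c' = 1 := by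
  intro c hc c' hc' hw hw'
  set A := Finset.univ.filter (fun i => c i = 1) with hA
  set B := Finset.univ.filter (fun i => c' i = 1) with hB
  have hsum : c + c' ∈ C := C.add_mem hc hc'
  have hkey : ∀ x y : ZMod 2, x + y = 1 ↔ ((x = 1 ∧ ¬ y = 1) ∨ (y = 1 ∧ ¬ x = 1)) := by
    decide
  have hfilt : Finset.univ.filter (fun i => (c + c') i = 1) = symmDiff A B := by
    ext i
    simp [hA, hB, Finset.mem_symmDiff, hkey]
  have hcard : A.card + B.card = (symmDiff A B).card + 2 * (A ∩ B).card := by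
    rw [symmDiff_def, Finset.sup_eq_union, Finset.card_union_of_disjoint]
    · have h1 : (A \ B).card = A.card - (A ∩ B).card := by
        rw [Finset.card_sdiff_add_card_inter A B |>.symm]; omega
      have h2 : (B \ A).card = B.card - (A ∩ B).card := by
        rw [Finset.card_sdiff_add_card_inter B A |>.symm, Finset.inter_comm]; omega
      have h3 : (A ∩ B).card ≤ A.card := Finset.card_le_card (Finset.inter_subset_left)
      have h4 : (A ∩ B).card ≤ B.card := Finset.card_le_card (Finset.inter_subset_right)
      omega
    · exact disjoint_sdiff_sdiff
  have hmod := hwt _ hsum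
  rw [hfilt] at hmod
  have hodd : (A ∩ B).card % 2 = 1 := by omega
  have hprod : ∀ x y : ZMod 2, x * y = if (x = 1 ∧ y = 1) then (1 : ZMod 2) else 0 := by
    decide
  have : c ⬝ᵥ c' = ((A ∩ B).card : ZMod 2) := by
    rw [dotProduct]
    rw [Finset.sum_congr rfl (fun i _ => hprod (c i) (c' i))]
    rw [Finset.sum_ite, Finset.sum_const, Finset.sum_const]
    simp only [smul_zero, add_zero, nsmul_eq_mul, mul_one]
    have heq : Finset.filter (fun i => c i = 1 ∧ c' i = 1) Finset.univ = A ∩ B := by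
      ext i; simp [hA, hB]
    rw [heq]
  rw [this, ← ZMod.natCast_mod (A ∩ B).card 2, hodd, Nat.cast_one]
end
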